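/- The quantities S_n satisfy the two-term linear recurrence S_n = 3·S_{n−1} − S_{n−2} for all n ≥ 3, together with the initial values S_1 = 3 and S_2 = 8. -/

import Mathlib

open Finset

/-- `S n` is the number of strings (lists) of length `n` over the alphabet `{0,1,2}`
(modeled as `Fin 3`) in which the pair `12` does not occur consecutively. -/
noncomputable def S (n : ℕ) : ℕ :=
  Nat.card {l : List (Fin 3) // l.length = n ∧ ¬ [1, 2] <:+: l}

private def F (n : ℕ) : Finset (List (Fin 3)) :=
  (((Finset.univ : Finset (List.Vector (Fin 3) n)).map
    ⟨List.Vector.toList, List.Vector.toList_injective⟩).filter (fun l => ¬ [1, 2] <:+: l))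

private lemma mem_F {n : ℕ} {l : List (Fin 3)} :
    l ∈ F n ↔ l.length = n ∧ ¬ [1, 2] <:+: l := by
  simp only [F, Finset.mem_filter, Finset.mem_map, Finset.mem_univ, true_and, Function.Embedding.coeFn_mk]
  constructor
  · rintro ⟨⟨⟨v, hv⟩, rfl⟩, h⟩; exact ⟨hv, h⟩
  · rintro ⟨h1, h2⟩; exact ⟨⟨⟨l, h1⟩, rfl⟩, h2⟩

private lemma S_eq (n : ℕ) : S n = (F n).card := by
  rw [S, ← Nat.card_eq_finsetCard]
  exact Nat.card_congr (Equiv.subtypeEquivRight (fun l => mem_F.symm))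

private lemma infix_cons (a : Fin 3) (l : List (Fin 3)) :
    [1, 2] <:+: (a :: l) ↔ (a = 1 ∧ l.head? = some 2) ∨ [1, 2] <:+: l := by
  rw [List.infix_cons_iff]
  constructor
  · rintro (h | h)
    · left
      rw [List.cons_prefix_cons] at h
      obtain ⟨rfl, h⟩ := h
      refine ⟨rfl, ?_⟩
      cases l with
      | nil => simp at h
      | cons b t => rw [List.cons_prefix_cons] at h; simp [h.1.symm]
    · exact Or.inr h
  · rintro (⟨rfl, h⟩ | h)
    · left
      cases l with
      | nil => simp at h
      | cons b t =>
        simp only [List.head?_cons, Option.some.injEq] at h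
        subst h
        simp [List.cons_prefix_cons]
    · exact Or.inr h

/-- valid lists of length n+1 starting with 2 -/
private lemma G_eq (n : ℕ) :
    (F (n + 1)).filter (fun l => l.head? = some 2) = (F n).image (fun l => 2 :: l) := by
  ext l
  simp only [mem_filter, mem_F, Finset.mem_image]
  constructor
  · rintro ⟨⟨hlen, hval⟩, hh⟩
    cases l with
    | nil => simp at hh
    | cons b t =>
      simp only [List.head?_cons, Option.some.injEq] at hh
      subst hh
      refine ⟨t, ⟨by simpa using hlen, fun h => hval ?_⟩, rfl⟩
      rw [infix_cons]; exact Or.inr h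
  · rintro ⟨m, ⟨hlen, hval⟩, rfl⟩
    refine ⟨⟨by simp [hlen], fun h => hval ?_⟩, rfl⟩
    rw [infix_cons] at h
    rcases h with ⟨h, -⟩ | h
    · exact absurd h (by decide)
    · exact h

private lemma cons_inj : Function.Injective (fun p : Fin 3 × List (Fin 3) => p.1 :: p.2) := by
  rintro ⟨a, l⟩ ⟨b, m⟩ h
  simp only [List.cons.injEq] at h
  simp [h.1, h.2, Prod.ext_iff]

private lemma key (n : ℕ) :
    3 * (F n).card = (F (n + 1)).card +
      ((F n).filter (fun l => l.head? = some 2)).card := by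
  have himg : ((Finset.univ : Finset (Fin 3)) ×ˢ F n).image (fun p => p.1 :: p.2)
      = F (n + 1) ∪ ((F n).filter (fun l => l.head? = some 2)).image (fun l => (1 : Fin 3) :: l) := by
    ext l
    simp only [Finset.mem_image, Finset.mem_product, Finset.mem_univ, true_and, mem_union,
      mem_F, mem_filter]
    constructor
    · rintro ⟨⟨a, m⟩, hm, rfl⟩
      by_cases hb : a = 1 ∧ m.head? = some 2
      · exact Or.inr ⟨m, ⟨⟨hm.1, hm.2⟩, hb.2⟩, by rw [hb.1]⟩
      · refine Or.inl ⟨by simp [hm.1], fun h => ?_⟩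
        rw [infix_cons] at h
        rcases h with h | h
        · exact hb h
        · exact hm.2 h
    · rintro (⟨hlen, hval⟩ | ⟨m, ⟨⟨hlen, hval⟩, hh⟩, rfl⟩)
      · cases l with
        | nil => simp at hlen
        | cons a m =>
          exact ⟨(a, m), ⟨by simpa using hlen,
            fun h => hval (by rw [infix_cons]; exact Or.inr h)⟩, rfl⟩
      · exact ⟨(1, m), ⟨hlen, hval⟩, rfl⟩
  have hdisj : Disjoint (F (n + 1))
      (((F n).filter (fun l => l.head? = some 2)).image (fun l => (1 : Fin 3) :: l)) := by
    rw [Finset.disjoint_right]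
    rintro l hl hl'
    simp only [Finset.mem_image, mem_filter, mem_F] at hl
    obtain ⟨m, ⟨-, hh⟩, rfl⟩ := hl
    exact (mem_F.mp hl').2 (by rw [infix_cons]; exact Or.inl ⟨rfl, hh⟩)
  have h1 := congrArg Finset.card himg
  rw [Finset.card_image_of_injective _ cons_inj, Finset.card_product,
    Finset.card_univ, Fintype.card_fin, Finset.card_union_of_disjoint hdisj,
    Finset.card_image_of_injective _ (fun l m h => by simpa using h)] at h1
  exact h1

private lemma key' (n : ℕ) : 3 * S (n + 1) = S (n + 2) + S n := by
  have := key (n + 1)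
  rw [G_eq] at this
  rw [Finset.card_image_of_injective _ (fun l m h => by simpa using h)] at this
  simpa [S_eq] using this

private lemma F0 : (F 0).card = 1 := by
  have : F 0 = {[]} := by
    ext l; simp only [mem_F, Finset.mem_singleton, List.length_eq_zero_iff]
    constructor
    · rintro ⟨rfl, -⟩; rfl
    · rintro rfl; exact ⟨rfl, by decide⟩
  rw [this]; rfl

private lemma S1 : S 1 = 3 := by
  have := key 0
  have h2 : ((F 0).filter (fun l => l.head? = some 2)).card = 0 := by
    rw [Finset.card_eq_zero]
    ext l
    simp only [mem_filter, mem_F, Finset.notMem_empty, iff_false]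
    rintro ⟨⟨hlen, -⟩, hh⟩
    rw [List.length_eq_zero_iff] at hlen
    subst hlen; simp at hh
  rw [F0, h2] at this
  norm_num at this
  rw [S_eq]; omega

private lemma S2 : S 2 = 8 := by
  have := key' 0
  have h0 : S 0 = 1 := by rw [S_eq, F0]
  norm_num at this
  rw [S1, h0] at this
  omega

theorem S_recurrence :
    (∀ n : ℕ, 3 ≤ n → (S n : ℤ) = 3 * S (n - 1) - S (n - 2)) ∧ S 1 = 3 ∧ S 2 = 8 := by
  refine ⟨fun n hn => ?_, S1, S2⟩
  obtain ⟨k, rfl⟩ : ∃ k, n = k + 3 := ⟨n - 3, by omega⟩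
  have := key' (k + 1)
  have e1 : k + 1 + 1 = k + 2 := by omega
  have e2 : k + 1 + 2 = k + 3 := by omega
  rw [e1, e2] at this
  have h1 : k + 3 - 1 = k + 2 := by omega
  have h2 : k + 3 - 2 = k + 1 := by omega
  rw [h1, h2]
  omega
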